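/- Under the negative-correlation condition on complier adjusted potential outcomes (Assumption (i): complier covariance of w(1), w(0) is at least −δ times the product of complier standard deviations, δ ∈ (0,1)) and with w_i(1) = w_i(0) for all non-compliers, the variance of the centered AR statistic at the true LATE satisfies Var(τ̂(β)) ≥ (1−δ)·( (n₀/(n·n₁))·S₁²(β) + (n₁/(n·n₀))·S₀²(β) ), where Var(τ̂(β)) = S₁²(β)/n₁ + S₀²(β)/n₀ − S₁₀²(β)/n, S_a²(β) = (π²(1−π)²/(n−1))·Σᵢ vᵢ(a,β)², S₁₀²(β) = (π²(1−π)²/(n−1))·Σᵢ(vᵢ(1,β) − vᵢ(0,β))², and vᵢ(a,β) is the centered adjusted potential outcome. -/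

import Mathlib

open Finset
set_option maxHeartbeats 800000

lemma expand_sq_sum {α : Type*} (s : Finset α) (x : α → ℝ) (t : ℝ) :
    ∑ i ∈ s, (x i - t) ^ 2 =
      ∑ i ∈ s, (x i) ^ 2 - 2 * t * (∑ i ∈ s, x i) + (s.card : ℝ) * t ^ 2 := by
  have h : ∀ i ∈ s, (x i - t) ^ 2 = (x i) ^ 2 - 2 * t * x i + t ^ 2 :=
    fun i _ => by ring
  rw [Finset.sum_congr rfl h, Finset.sum_add_distrib, Finset.sum_sub_distrib,
    ← Finset.mul_sum, Finset.sum_const, nsmul_eq_mul]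

theorem stmt4 (n n₁ : ℕ) (hn₁ : 1 ≤ n₁) (hn : n₁ ≤ n - 1) (hnpos : 2 ≤ n)
    (δ : ℝ) (hδ : δ ∈ Set.Ioo (0 : ℝ) 1)
    (C : Finset (Fin n)) (hCne : C.Nonempty)
    (w1 w0 : Fin n → ℝ)
    (hnonC : ∀ i ∉ C, w1 i = w0 i)
    (hsumC : ∑ i ∈ C, (w1 i - w0 i) = 0)
    (μ1C μ0C : ℝ)
    (hμ1C : μ1C = (1 / (C.card : ℝ)) * ∑ i ∈ C, w1 i)
    (hμ0C : μ0C = (1 / (C.card : ℝ)) * ∑ i ∈ C, w0 i)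
    (hcov : (1 / ((C.card : ℝ) - 1)) * ∑ i ∈ C, (w1 i - μ1C) * (w0 i - μ0C) ≥
      -δ * Real.sqrt ((1 / ((C.card : ℝ) - 1)) * ∑ i ∈ C, (w1 i - μ1C) ^ 2)
         * Real.sqrt ((1 / ((C.card : ℝ) - 1)) * ∑ i ∈ C, (w0 i - μ0C) ^ 2))
    (π : ℝ) (hπ : π = (n₁ : ℝ) / n)
    (v1 v0 : Fin n → ℝ)
    (hv1 : ∀ i, v1 i = w1 i - (1 / (n : ℝ)) * ∑ j, w1 j)
    (hv0 : ∀ i, v0 i = w0 i - (1 / (n : ℝ)) * ∑ j, w0 j)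
    (S1 S0 S10 : ℝ)
    (hS1 : S1 = (π ^ 2 * (1 - π) ^ 2 / ((n : ℝ) - 1)) * ∑ i, (v1 i) ^ 2)
    (hS0 : S0 = (π ^ 2 * (1 - π) ^ 2 / ((n : ℝ) - 1)) * ∑ i, (v0 i) ^ 2)
    (hS10 : S10 = (π ^ 2 * (1 - π) ^ 2 / ((n : ℝ) - 1)) * ∑ i, (v1 i - v0 i) ^ 2) :
    S1 / (n₁ : ℝ) + S0 / ((n - n₁ : ℕ) : ℝ) - S10 / (n : ℝ) ≥
      (1 - δ) * (((n - n₁ : ℕ) : ℝ) / ((n : ℝ) * n₁) * S1 +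
        (n₁ : ℝ) / ((n : ℝ) * ((n - n₁ : ℕ) : ℝ)) * S0) := by
  obtain ⟨hδ0, hδ1⟩ := hδ
  -- numeric setup
  have hn₁n : n₁ ≤ n := le_trans hn (Nat.sub_le n 1)
  have hn0 : 1 ≤ n - n₁ := by omega
  set N : ℝ := (n : ℝ) with hN
  set N1 : ℝ := (n₁ : ℝ) with hN1
  set N0 : ℝ := ((n - n₁ : ℕ) : ℝ) with hN0
  have hN0eq : N0 = N - N1 := by
    rw [hN0, hN, hN1, Nat.cast_sub hn₁n]
  have hN1pos : (1 : ℝ) ≤ N1 := by rw [hN1]; exact_mod_cast hn₁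
  have hN0pos : (1 : ℝ) ≤ N0 := by rw [hN0]; exact_mod_cast hn0
  have hN2 : (2 : ℝ) ≤ N := by rw [hN]; exact_mod_cast hnpos
  have hNpos : (0 : ℝ) < N := by linarith
  have hN1pos' : (0 : ℝ) < N1 := by linarith
  have hN0pos' : (0 : ℝ) < N0 := by linarith
  -- the common constant
  set c : ℝ := π ^ 2 * (1 - π) ^ 2 / ((n : ℝ) - 1) with hc
  have hcnn : 0 ≤ c := by
    apply div_nonneg (by positivity); linarith
  -- complier means coincide
  have hmpos : 0 < C.card := hCne.card_pos
  have hmR : (0 : ℝ) < (C.card : ℝ) := by exact_mod_cast hmpos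
  have hμeq : μ1C = μ0C := by
    rw [hμ1C, hμ0C]
    have : ∑ i ∈ C, w1 i = ∑ i ∈ C, w0 i := by
      have := hsumC
      rw [Finset.sum_sub_distrib] at this
      linarith
    rw [this]
  -- global sums coincide
  have hsumw : ∑ j, w1 j = ∑ j, w0 j := by
    have h1 : ∑ j ∈ C, (w1 j - w0 j) = ∑ j, (w1 j - w0 j) :=
      Finset.sum_subset (Finset.subset_univ C)
        (fun i _ hi => by rw [hnonC i hi]; ring)
    rw [hsumC] at h1
    rw [Finset.sum_sub_distrib] at h1
    linarith
  -- v1 - v0 = w1 - w0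
  have hvdiff : ∀ i, v1 i - v0 i = w1 i - w0 i := by
    intro i; rw [hv1, hv0, hsumw]; ring
  -- key sums
  set A : ℝ := ∑ i ∈ C, (w1 i - μ1C) ^ 2 with hA
  set B : ℝ := ∑ i ∈ C, (w0 i - μ0C) ^ 2 with hB
  set Cv : ℝ := ∑ i ∈ C, (w1 i - μ1C) * (w0 i - μ0C) with hCv
  have hAnn : 0 ≤ A := Finset.sum_nonneg fun i _ => sq_nonneg _
  have hBnn : 0 ≤ B := Finset.sum_nonneg fun i _ => sq_nonneg _
  -- sum of squared differences
  have hSd : ∑ i, (v1 i - v0 i) ^ 2 = A + B - 2 * Cv := by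
    have h1 : ∑ i ∈ C, (v1 i - v0 i) ^ 2 = ∑ i, (v1 i - v0 i) ^ 2 :=
      Finset.sum_subset (Finset.subset_univ C)
        (fun i _ hi => by rw [hvdiff, hnonC i hi]; ring)
    rw [← h1]
    have h2 : ∀ i ∈ C, (v1 i - v0 i) ^ 2 =
        (w1 i - μ1C) ^ 2 + (w0 i - μ0C) ^ 2 -
          2 * ((w1 i - μ1C) * (w0 i - μ0C)) := by
      intro i _; rw [hvdiff, hμeq]; ring
    rw [Finset.sum_congr rfl h2, Finset.sum_sub_distrib, Finset.sum_add_distrib,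
      ← Finset.mul_sum]
  -- A ≤ ∑ v1², B ≤ ∑ v0²
  have hsC1 : ∑ i ∈ C, w1 i = (C.card : ℝ) * μ1C := by
    rw [hμ1C]; field_simp
  have hsC0 : ∑ i ∈ C, w0 i = (C.card : ℝ) * μ0C := by
    rw [hμ0C, ← mul_assoc, mul_one_div_cancel hmR.ne', one_mul]
  have hA_le : A ≤ ∑ i, (v1 i) ^ 2 := by
    have h1 : ∑ i ∈ C, (v1 i) ^ 2 ≤ ∑ i, (v1 i) ^ 2 :=
      Finset.sum_le_sum_of_subset_of_nonneg (Finset.subset_univ C)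
        (fun i _ _ => sq_nonneg _)
    have h2 : A ≤ ∑ i ∈ C, (v1 i) ^ 2 := by
      set t : ℝ := (1 / N) * ∑ j, w1 j with ht
      have hv : ∀ i ∈ C, (v1 i) ^ 2 = (w1 i - t) ^ 2 :=
        fun i _ => by rw [hv1]
      have hexp : ∑ i ∈ C, (w1 i - t) ^ 2 = A + (C.card : ℝ) * (t - μ1C) ^ 2 := by
        rw [hA, expand_sq_sum, expand_sq_sum, hsC1]; ring
      rw [Finset.sum_congr rfl hv, hexp]
      have := mul_nonneg hmR.le (sq_nonneg (t - μ1C))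
      linarith
    linarith
  have hB_le : B ≤ ∑ i, (v0 i) ^ 2 := by
    have h1 : ∑ i ∈ C, (v0 i) ^ 2 ≤ ∑ i, (v0 i) ^ 2 :=
      Finset.sum_le_sum_of_subset_of_nonneg (Finset.subset_univ C)
        (fun i _ _ => sq_nonneg _)
    have h2 : B ≤ ∑ i ∈ C, (v0 i) ^ 2 := by
      set t : ℝ := (1 / N) * ∑ j, w0 j with ht
      have hv : ∀ i ∈ C, (v0 i) ^ 2 = (w0 i - t) ^ 2 :=
        fun i _ => by rw [hv0]
      have hexp : ∑ i ∈ C, (w0 i - t) ^ 2 = B + (C.card : ℝ) * (t - μ0C) ^ 2 := by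
        rw [hB, expand_sq_sum, expand_sq_sum, hsC0]; ring
      rw [Finset.sum_congr rfl hv, hexp]
      have := mul_nonneg hmR.le (sq_nonneg (t - μ0C))
      linarith
    linarith
  -- covariance bound
  have hCovb : Cv ≥ -δ * Real.sqrt A * Real.sqrt B := by
    rcases eq_or_lt_of_le (show 1 ≤ C.card from hmpos) with h1 | h2
    · -- card = 1
      obtain ⟨i0, hi0⟩ := Finset.card_eq_one.mp h1.symm
      have hμ : μ1C = w1 i0 := by rw [hμ1C, hi0]; simp
      have hCv0 : Cv = 0 := by
        rw [hCv, hi0, Finset.sum_singleton, hμ]; ring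
      have hA0 : A = 0 := by
        rw [hA, hi0, Finset.sum_singleton, hμ]; ring
      rw [hCv0, hA0, Real.sqrt_zero]
      simp
    · -- card ≥ 2
      have hk : (0 : ℝ) < (C.card : ℝ) - 1 := by
        have : (2 : ℝ) ≤ (C.card : ℝ) := by exact_mod_cast h2
        linarith
      set k : ℝ := (C.card : ℝ) - 1 with hkk
      have hsA : Real.sqrt ((1 / k) * A) = Real.sqrt (1 / k) * Real.sqrt A :=
        Real.sqrt_mul (by positivity) _
      have hsB : Real.sqrt ((1 / k) * B) = Real.sqrt (1 / k) * Real.sqrt B :=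
        Real.sqrt_mul (by positivity) _
      have hss : Real.sqrt (1 / k) * Real.sqrt (1 / k) = 1 / k :=
        Real.mul_self_sqrt (by positivity)
      have hc2 := hcov
      rw [hsA, hsB] at hc2
      have hrw : -δ * (Real.sqrt (1 / k) * Real.sqrt A) *
          (Real.sqrt (1 / k) * Real.sqrt B) =
          (1 / k) * (-δ * (Real.sqrt A * Real.sqrt B)) := by
        have h' : -δ * (Real.sqrt (1 / k) * Real.sqrt A) *
            (Real.sqrt (1 / k) * Real.sqrt B) =
            (Real.sqrt (1 / k) * Real.sqrt (1 / k)) *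
              (-δ * (Real.sqrt A * Real.sqrt B)) := by ring
        rw [h', hss]
      rw [ge_iff_le, hrw] at hc2
      have hkinv : (0 : ℝ) < 1 / k := by positivity
      have := (mul_le_mul_iff_right₀ hkinv).mp hc2
      linarith
  -- AM-GM for weighted product
  have h2ab : 2 * Real.sqrt A * Real.sqrt B ≤ (N0 / N1) * A + (N1 / N0) * B := by
    have ht : (0 : ℝ) < N0 / N1 := by positivity
    have ht' : (0 : ℝ) < N1 / N0 := by positivity
    have h1 : Real.sqrt (N0 / N1) * Real.sqrt (N1 / N0) = 1 := by
      rw [← Real.sqrt_mul ht.le]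
      rw [show (N0 / N1) * (N1 / N0) = 1 by field_simp]
      exact Real.sqrt_one
    have hkey : (Real.sqrt (N0 / N1) * Real.sqrt A -
        Real.sqrt (N1 / N0) * Real.sqrt B) ^ 2 =
        (N0 / N1) * A + (N1 / N0) * B - 2 * Real.sqrt A * Real.sqrt B := by
      have h' : (Real.sqrt (N0 / N1) * Real.sqrt A -
          Real.sqrt (N1 / N0) * Real.sqrt B) ^ 2 =
          (Real.sqrt (N0 / N1)) ^ 2 * (Real.sqrt A) ^ 2 +
            (Real.sqrt (N1 / N0)) ^ 2 * (Real.sqrt B) ^ 2 -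
            2 * (Real.sqrt (N0 / N1) * Real.sqrt (N1 / N0)) *
              (Real.sqrt A * Real.sqrt B) := by ring
      rw [h', h1, Real.sq_sqrt ht.le, Real.sq_sqrt ht'.le, Real.sq_sqrt hAnn,
        Real.sq_sqrt hBnn]
      ring
    have h0 := sq_nonneg (Real.sqrt (N0 / N1) * Real.sqrt A -
        Real.sqrt (N1 / N0) * Real.sqrt B)
    rw [hkey] at h0
    linarith
  -- key bound: S10 ≤ S1 + S0 + δ*((N0/N1)*S1 + (N1/N0)*S0)
  have hS1' : c * A ≤ S1 := by
    rw [hS1]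
    exact mul_le_mul_of_nonneg_left hA_le hcnn
  have hS0' : c * B ≤ S0 := by
    rw [hS0]
    exact mul_le_mul_of_nonneg_left hB_le hcnn
  have hS10' : S10 = c * (A + B - 2 * Cv) := by
    rw [hS10, hSd]
  have hS1nn : 0 ≤ S1 := by
    rw [hS1]; exact mul_nonneg hcnn (Finset.sum_nonneg fun i _ => sq_nonneg _)
  have hS0nn : 0 ≤ S0 := by
    rw [hS0]; exact mul_nonneg hcnn (Finset.sum_nonneg fun i _ => sq_nonneg _)
  have key : S10 ≤ S1 + S0 + δ * ((N0 / N1) * S1 + (N1 / N0) * S0) := by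
    have hb1 : c * (-δ * Real.sqrt A * Real.sqrt B) ≤ c * Cv :=
      mul_le_mul_of_nonneg_left hCovb hcnn
    have hb2 : c * (2 * Real.sqrt A * Real.sqrt B) ≤
        c * ((N0 / N1) * A + (N1 / N0) * B) :=
      mul_le_mul_of_nonneg_left h2ab hcnn
    have hb2' : δ * (c * (2 * Real.sqrt A * Real.sqrt B)) ≤
        δ * (c * ((N0 / N1) * A + (N1 / N0) * B)) :=
      mul_le_mul_of_nonneg_left hb2 hδ0.le
    have ht : (0 : ℝ) < N0 / N1 := by positivity
    have ht' : (0 : ℝ) < N1 / N0 := by positivity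
    have h3 : (δ * (N0 / N1)) * (c * A) ≤ (δ * (N0 / N1)) * S1 :=
      mul_le_mul_of_nonneg_left hS1' (mul_nonneg hδ0.le ht.le)
    have h4 : (δ * (N1 / N0)) * (c * B) ≤ (δ * (N1 / N0)) * S0 :=
      mul_le_mul_of_nonneg_left hS0' (mul_nonneg hδ0.le ht'.le)
    rw [hS10']
    linarith
  -- final rearrangement
  rw [ge_iff_le, ← sub_nonneg]
  have heq : S1 / N1 + S0 / N0 - S10 / N -
      (1 - δ) * (N0 / (N * N1) * S1 + N1 / (N * N0) * S0) =
      (1 / N) * ((S1 + S0 + δ * ((N0 / N1) * S1 + (N1 / N0) * S0) - S10)) := by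
    have h1 : N1 ≠ 0 := ne_of_gt hN1pos'
    have hNne : N ≠ 0 := ne_of_gt hNpos
    have h0 : N - N1 ≠ 0 := by rw [← hN0eq]; exact ne_of_gt hN0pos'
    rw [hN0eq]
    field_simp
    ring
  rw [heq]
  exact mul_nonneg (by positivity) (sub_nonneg.mpr key)
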